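/- For fixed label distribution p* ∈ Δ_J°, the conditional SD-risk r_{β,λ}(p*, p) = (1/A) Σ_j [p_j^{1+β} − ((1+β)/B) p_j^B (p_j*)^A + (A/B)(p_j*)^{1+β}] over p ∈ Δ_J is nonnegative and is uniquely minimized at p = p*. -/

import Mathlib

open Finset

/-- The conditional SD-risk `r_{β,λ}(p*, p)`. -/
noncomputable def condSDRisk (A B beta : ℝ) {J : ℕ} (pstar p : Fin J → ℝ) : ℝ :=
  (1 / A) * ∑ j, (p j ^ (1 + beta)
    - ((1 + beta) / B) * p j ^ B * pstar j ^ A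
    + (A / B) * pstar j ^ (1 + beta))


lemma key_strict {a b A B : ℝ} (ha : 0 < a) (hb : 0 ≤ b) (hA : 0 < A) (hB : 0 < B)
    (hne : b ≠ a) :
    0 < b ^ (A + B) - ((A + B) / B) * b ^ B * a ^ A + (A / B) * a ^ (A + B) := by
  set S := A + B with hS
  have hSpos : 0 < S := by positivity
  set x := (b / a) ^ S with hxdef
  have hba : 0 ≤ b / a := by positivity
  have hx0 : 0 ≤ x := Real.rpow_nonneg hba _
  have hx1 : x ≠ 1 := by
    rcases lt_trichotomy (b / a) 1 with h | h | h
    · have : x < 1 ^ S := Real.rpow_lt_rpow hba h hSpos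
      simpa using this.ne
    · exact absurd (by field_simp at h; linarith) hne
    · have : (1 : ℝ) ^ S < x := Real.rpow_lt_rpow (by norm_num) h hSpos
      simpa using this.ne'
  have hbern := rpow_one_add_lt_one_add_mul_self (s := x - 1)
    (by linarith) (sub_ne_zero.mpr hx1) (p := B / S) (by positivity)
    (by rw [div_lt_one hSpos]; linarith)
  rw [show (1 : ℝ) + (x - 1) = x by ring] at hbern
  have hxu : x ^ (B / S) = b ^ B / a ^ B := by
    rw [hxdef, ← Real.rpow_mul hba, show S * (B / S) = B by field_simp,
      Real.div_rpow hb ha.le]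
  have hxv : x = b ^ S / (a ^ A * a ^ B) := by
    rw [hxdef, Real.div_rpow hb ha.le, ← Real.rpow_add ha]
  rw [hxu, hxv] at hbern
  have haA : 0 < a ^ A := Real.rpow_pos_of_pos ha _
  have haB : 0 < a ^ B := Real.rpow_pos_of_pos ha _
  have hbB : 0 ≤ b ^ B := Real.rpow_nonneg hb _
  have hbS : 0 ≤ b ^ S := Real.rpow_nonneg hb _
  set u := a ^ A
  set v := a ^ B
  set w := b ^ B
  set z := b ^ S
  have haS : a ^ S = u * v := Real.rpow_add ha A B
  rw [haS]
  have h1 := mul_lt_mul_of_pos_left hbern (show (0:ℝ) < S * (u * v) by positivity)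
  have h1' : S * (w * u) < S * (u * v) + B * (z - u * v) := by
    have hl : S * (u * v) * (w / v) = S * (w * u) := by field_simp
    have hr : S * (u * v) * (1 + B / S * (z / (u * v) - 1))
        = S * (u * v) + B * (z - u * v) := by field_simp
    rw [hl, hr] at h1
    exact h1
  have h3 : S * (u * v) = A * (u * v) + B * (u * v) := by rw [hS]; ring
  have hgoal : 0 < B * z - S * (w * u) + A * (u * v) := by linarith [h1', h3]
  have heq : z - S / B * w * u + A / B * (u * v)
      = (1 / B) * (B * z - S * (w * u) + A * (u * v)) := by field_simp
  rw [heq]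
  exact mul_pos (by positivity) hgoal


lemma term_eq {a A B : ℝ} (ha : 0 < a) (hB : B ≠ 0) :
    a ^ (A + B) - ((A + B) / B) * a ^ B * a ^ A + (A / B) * a ^ (A + B) = 0 := by
  have h : a ^ B * a ^ A = a ^ (A + B) := by
    rw [← Real.rpow_add ha, add_comm]
  rw [mul_assoc, h]
  field_simp
  ring

theorem condSDRisk_nonneg_unique_min (J : ℕ) (hJ : 2 ≤ J)
    (beta lam A B : ℝ) (hbeta0 : 0 ≤ beta) (hbeta1 : beta ≤ 1)
    (hA : A = 1 + lam * (1 - beta)) (hB : B = beta - lam * (1 - beta))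
    (hApos : 0 < A) (hBpos : 0 < B)
    (pstar : Fin J → ℝ) (hps : ∀ j, 0 < pstar j) (hpssum : ∑ j, pstar j = 1) :
    (∀ p : Fin J → ℝ, (∀ j, 0 ≤ p j) → ∑ j, p j = 1 →
      0 ≤ condSDRisk A B beta pstar p) ∧
    (∀ p : Fin J → ℝ, (∀ j, 0 ≤ p j) → ∑ j, p j = 1 →
      (condSDRisk A B beta pstar p = 0 ↔ p = pstar)) := by
  have hAB : 1 + beta = A + B := by rw [hA, hB]; ring
  have hterm : ∀ (p : Fin J → ℝ), (∀ j, 0 ≤ p j) → ∀ j,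
      0 ≤ p j ^ (1 + beta) - ((1 + beta) / B) * p j ^ B * pstar j ^ A
        + (A / B) * pstar j ^ (1 + beta) := by
    intro p hp j
    rw [hAB]
    by_cases h : p j = pstar j
    · rw [h]; rw [term_eq (hps j) hBpos.ne']
    · exact (key_strict (hps j) (hp j) hApos hBpos h).le
  have htermpos : ∀ (p : Fin J → ℝ), (∀ j, 0 ≤ p j) → ∀ j, p j ≠ pstar j →
      0 < p j ^ (1 + beta) - ((1 + beta) / B) * p j ^ B * pstar j ^ A
        + (A / B) * pstar j ^ (1 + beta) := by
    intro p hp j h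
    rw [hAB]
    exact key_strict (hps j) (hp j) hApos hBpos h
  constructor
  · intro p hp _
    apply mul_nonneg (by positivity)
    exact Finset.sum_nonneg fun j _ => hterm p hp j
  · intro p hp hpsum
    constructor
    · intro h0
      have hsum0 : ∑ j, (p j ^ (1 + beta)
          - ((1 + beta) / B) * p j ^ B * pstar j ^ A
          + (A / B) * pstar j ^ (1 + beta)) = 0 := by
        have := h0
        unfold condSDRisk at this
        rcases mul_eq_zero.mp this with h | h
        · exact absurd h (by positivity)
        · exact h
      have hall := (Finset.sum_eq_zero_iff_of_nonneg
        (fun j _ => hterm p hp j)).mp hsum0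
      funext j
      by_contra hne
      exact (htermpos p hp j hne).ne' (hall j (Finset.mem_univ j))
    · intro h
      subst h
      unfold condSDRisk
      rw [Finset.sum_eq_zero, mul_zero]
      intro j _
      rw [hAB]
      exact term_eq (hps j) hBpos.ne'
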